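/- arXiv:2207.13312 — 2 statements merged into one kernel-verified Lean document; each statement's English description precedes it below -/
import Mathlib

section
/- For every f : 𝔽₂ⁿ → [0,1] and every δ > 0, there exists a partition Π of 𝔽₂ⁿ all of whose parts are affine subspaces of codimension at most 1/δ³, such that the set of points x ∈ 𝔽₂ⁿ whose part π ∈ Π has restriction f_π that is not δ-regular has size at most δ·2ⁿ. -/
open Finset

abbrev F2 (n : ℕ) := Fin n → ZMod 2

/-- The 𝔽₂ bilinear form ⟨γ,x⟩ = Σᵢ γᵢ xᵢ. -/
def ip {n : ℕ} (γ x : F2 n) : ZMod 2 := ∑ i, γ i * x i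

/-- The character χ_γ(x) = (-1)^⟨γ,x⟩. -/
noncomputable def chi {n : ℕ} (γ x : F2 n) : ℝ := (-1 : ℝ) ^ (ip γ x).val

/-- Fourier coefficient f̂(γ) = 2^{-n} Σ_x f(x) (-1)^⟨γ,x⟩. -/
noncomputable def fCoeff {n : ℕ} (f : F2 n → ℝ) (γ : F2 n) : ℝ :=
  (∑ x : F2 n, f x * chi γ x) / 2 ^ n

/-- f has Fourier degree at most d. -/
def HasFourierDegLE {n : ℕ} (f : F2 n → ℝ) (d : ℕ) : Prop :=
  ∀ γ : F2 n, d < hammingNorm γ → fCoeff f γ = 0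

/-- Orthogonal subspace 𝒱^⊥. -/
def perp {n : ℕ} (V : Submodule (ZMod 2) (F2 n)) : Submodule (ZMod 2) (F2 n) where
  carrier := {γ | ∀ v ∈ V, ip γ v = 0}
  zero_mem' := by
    intro v _
    simp [ip]
  add_mem' := by
    intro a b ha hb v hv
    have h : ip (a + b) v = ip a v + ip b v := by
      simp [ip, add_mul, Finset.sum_add_distrib]
    simp only [Set.mem_setOf_eq] at ha hb ⊢
    rw [h, ha v hv, hb v hv, add_zero]
  smul_mem' := by
    intro c a ha v hv
    have h : ip (c • a) v = c * ip a v := by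
      simp [ip, Finset.mul_sum, mul_assoc]
    simp only [Set.mem_setOf_eq] at ha ⊢
    rw [h, ha v hv, mul_zero]

/-- Fourier coefficient of the restriction of f to the affine subspace α + 𝒱,
indexed by γ (from a complement 𝒲 of 𝒱^⊥):
f̂_𝒰(γ) = |𝒱|⁻¹ Σ_{x ∈ 𝒱} f(x+α)(-1)^⟨γ,x⟩. -/
noncomputable def restrictCoeff {n : ℕ} (f : F2 n → ℝ) (V : Submodule (ZMod 2) (F2 n))
    (α γ : F2 n) : ℝ :=
  (∑ x : F2 n, Set.indicator (V : Set (F2 n)) (fun x => f (x + α) * chi γ x) x) / (Nat.card V)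

/-- The restriction of f to α + 𝒱 is δ-regular. -/
def IsDeltaRegular {n : ℕ} (f : F2 n → ℝ) (V : Submodule (ZMod 2) (F2 n)) (α : F2 n)
    (δ : ℝ) : Prop :=
  ∀ W : Submodule (ZMod 2) (F2 n), IsCompl W (perp V) →
    ∀ γ ∈ W, γ ≠ 0 → |restrictCoeff f V α γ| ≤ δ

/-- span of the standard basis vectors indexed by J. -/
def spanJ {n : ℕ} (J : Finset (Fin n)) : Submodule (ZMod 2) (F2 n) where
  carrier := {x | ∀ i ∉ J, x i = 0}
  zero_mem' := by intro i _; rfl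
  add_mem' := by
    intro a b ha hb i hi
    simp only [Set.mem_setOf_eq] at ha hb ⊢
    simp [Pi.add_apply, ha i hi, hb i hi]
  smul_mem' := by
    intro c a ha i hi
    simp only [Set.mem_setOf_eq] at ha ⊢
    simp [Pi.smul_apply, ha i hi]

section Aux
variable {n : ℕ}

lemma ip_zero_left (x : F2 n) : ip 0 x = 0 := by simp [ip]

lemma ip_add_right (γ x y : F2 n) : ip γ (x + y) = ip γ x + ip γ y := by
  simp [ip, mul_add, Finset.sum_add_distrib]

lemma ip_smul_right (γ : F2 n) (c : ZMod 2) (x : F2 n) : ip γ (c • x) = c * ip γ x := by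
  simp [ip, Finset.mul_sum]; ring_nf; simp [mul_comm, mul_left_comm]

/-- ip γ as a linear map in the second variable. -/
def ipL (γ : F2 n) : F2 n →ₗ[ZMod 2] ZMod 2 where
  toFun := fun x => ip γ x
  map_add' := fun x y => ip_add_right γ x y
  map_smul' := fun c x => ip_smul_right γ c x

@[simp] lemma ipL_apply (γ x : F2 n) : ipL γ x = ip γ x := rfl

lemma chi_zero_left (x : F2 n) : chi 0 x = 1 := by simp [chi, ip_zero_left]

lemma neg_one_pow_val_add (a b : ZMod 2) :
    (-1 : ℝ) ^ (a + b).val = (-1 : ℝ) ^ a.val * (-1 : ℝ) ^ b.val := by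
  rcases (by fin_cases a <;> [left; right] <;> rfl : a = 0 ∨ a = 1) with rfl | rfl <;>
  rcases (by fin_cases b <;> [left; right] <;> rfl : b = 0 ∨ b = 1) with rfl | rfl <;>
  norm_num [show ((2:ZMod 2)).val = 0 from rfl, ZMod.val_one]

lemma chi_add_right (γ x y : F2 n) : chi γ (x + y) = chi γ x * chi γ y := by
  rw [chi, ip_add_right, neg_one_pow_val_add]; rfl

lemma chi_eq_one (γ x : F2 n) (h : ip γ x = 0) : chi γ x = 1 := by simp [chi, h]
lemma chi_eq_neg_one (γ x : F2 n) (h : ip γ x = 1) : chi γ x = -1 := by simp [chi, h, ZMod.val_one]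

end Aux
section Fin2
variable {n : ℕ}
attribute [local instance] Classical.propDecidable

/-- The finset of elements of V. -/
noncomputable def Vfin (V : Submodule (ZMod 2) (F2 n)) : Finset (F2 n) :=
  Finset.univ.filter (· ∈ V)

lemma mem_Vfin {V : Submodule (ZMod 2) (F2 n)} {x : F2 n} : x ∈ Vfin V ↔ x ∈ V := by
  simp [Vfin]

lemma card_Vfin (V : Submodule (ZMod 2) (F2 n)) : (Vfin V).card = Nat.card V := by
  rw [Nat.card_eq_fintype_card, Fintype.card_subtype]
  rfl

lemma Vfin_card_pos (V : Submodule (ZMod 2) (F2 n)) : 0 < (Vfin V).card :=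
  Finset.card_pos.2 ⟨0, mem_Vfin.2 V.zero_mem⟩

lemma restrictCoeff_eq (f : F2 n → ℝ) (V : Submodule (ZMod 2) (F2 n)) (α γ : F2 n) :
    restrictCoeff f V α γ = (∑ v ∈ Vfin V, f (v + α) * chi γ v) / (Vfin V).card := by
  rw [restrictCoeff, card_Vfin, Finset.sum_indicator_eq_sum_filter]
  rfl

/-- The coset α + V as a finset (elements y with y + α ∈ V, using char 2). -/
noncomputable def coset (V : Submodule (ZMod 2) (F2 n)) (α : F2 n) : Finset (F2 n) :=
  Finset.univ.filter (fun y => y + α ∈ V)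

lemma mem_coset {V : Submodule (ZMod 2) (F2 n)} {α y : F2 n} :
    y ∈ coset V α ↔ y + α ∈ V := by simp [coset]

lemma add_self_f2 (x : F2 n) : x + x = 0 := by
  funext i; exact CharTwo.add_self_eq_zero _

lemma add_add_cancel_f2 (x y : F2 n) : x + y + y = x := by
  rw [add_assoc, add_self_f2, add_zero]

lemma restrictCoeff_coset (f : F2 n → ℝ) (V : Submodule (ZMod 2) (F2 n)) (α γ : F2 n) :
    restrictCoeff f V α γ = (∑ y ∈ coset V α, f y * chi γ (y + α)) / (Vfin V).card := by
  rw [restrictCoeff_eq]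
  congr 1
  refine Finset.sum_nbij' (fun v => v + α) (fun y => y + α) ?_ ?_ ?_ ?_ ?_
  · intro v hv; rw [mem_coset, add_add_cancel_f2]; exact mem_Vfin.1 hv
  · intro y hy; exact mem_Vfin.2 (mem_coset.1 hy)
  · intro v _; exact add_add_cancel_f2 v α
  · intro y _; exact add_add_cancel_f2 y α
  · intro v _; rw [add_add_cancel_f2]

lemma card_coset (V : Submodule (ZMod 2) (F2 n)) (α : F2 n) :
    (coset V α).card = (Vfin V).card := by
  refine Finset.card_bij (fun y _ => y + α) ?_ ?_ ?_
  · intro y hy; exact mem_Vfin.2 (mem_coset.1 hy)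
  · intro a ha b hb h
    have := congrArg (· + α) h
    simpa [add_add_cancel_f2] using this
  · intro v hv
    exact ⟨v + α, by rw [mem_coset, add_add_cancel_f2]; exact mem_Vfin.1 hv, add_add_cancel_f2 v α⟩

lemma mean_eq (f : F2 n → ℝ) (V : Submodule (ZMod 2) (F2 n)) (α : F2 n) :
    restrictCoeff f V α 0 = (∑ y ∈ coset V α, f y) / (coset V α).card := by
  rw [restrictCoeff_coset, card_coset]
  congr 1
  exact Finset.sum_congr rfl fun y _ => by rw [chi_zero_left, mul_one]

lemma mean_nonneg {f : F2 n → ℝ} (hbd : ∀ x, f x ∈ Set.Icc (0:ℝ) 1)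
    (V : Submodule (ZMod 2) (F2 n)) (α : F2 n) : 0 ≤ restrictCoeff f V α 0 := by
  rw [mean_eq]
  exact div_nonneg (Finset.sum_nonneg fun y _ => (hbd y).1) (Nat.cast_nonneg _)

lemma mean_le_one {f : F2 n → ℝ} (hbd : ∀ x, f x ∈ Set.Icc (0:ℝ) 1)
    (V : Submodule (ZMod 2) (F2 n)) (α : F2 n) : restrictCoeff f V α 0 ≤ 1 := by
  rw [mean_eq]
  have hc : (0:ℝ) < ((coset V α).card : ℝ) := by
    exact_mod_cast (card_coset V α ▸ Vfin_card_pos V)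
  rw [div_le_one hc]
  calc ∑ y ∈ coset V α, f y ≤ ∑ y ∈ coset V α, 1 :=
        Finset.sum_le_sum fun y _ => (hbd y).2
    _ = ((coset V α).card : ℝ) := by simp

end Fin2
section PartitionLemmas
variable {n : ℕ}
attribute [local instance] Classical.propDecidable

variable {f : F2 n → ℝ} {Vp : F2 n → Submodule (ZMod 2) (F2 n)} {αp : F2 n → F2 n}

/-- Strong partition hypotheses: each x lies in its own coset, and part data is
constant on cosets. -/
def PartGood (Vp : F2 n → Submodule (ZMod 2) (F2 n)) (αp : F2 n → F2 n) : Prop :=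
  (∀ x, x + αp x ∈ Vp x) ∧
  (∀ x y : F2 n, y + αp x ∈ Vp x → Vp y = Vp x ∧ αp y = αp x)

lemma PartGood.mem_own (h : PartGood Vp αp) (x : F2 n) : x ∈ coset (Vp x) (αp x) :=
  mem_coset.2 (h.1 x)

lemma PartGood.eq_of_mem (h : PartGood Vp αp) {x y : F2 n}
    (hy : y ∈ coset (Vp x) (αp x)) : Vp y = Vp x ∧ αp y = αp x :=
  h.2 x y (mem_coset.1 hy)

lemma PartGood.coset_eq (h : PartGood Vp αp) {x y : F2 n}
    (hy : y ∈ coset (Vp x) (αp x)) : coset (Vp y) (αp y) = coset (Vp x) (αp x) := by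
  obtain ⟨h1, h2⟩ := h.eq_of_mem hy
  rw [h1, h2]

lemma PartGood.symm (h : PartGood Vp αp) {x y : F2 n}
    (hy : y ∈ coset (Vp x) (αp x)) : x ∈ coset (Vp y) (αp y) := by
  rw [h.coset_eq hy]; exact h.mem_own x

/-- Double counting: if u is constant on parts, then Σ m·u = Σ f·u,
where m(x) is the mean of f on the part of x. -/
lemma sum_mean_mul (h : PartGood Vp αp) (u : F2 n → ℝ)
    (hu : ∀ x y, y ∈ coset (Vp x) (αp x) → u y = u x) :
    ∑ x : F2 n, restrictCoeff f (Vp x) (αp x) 0 * u x = ∑ x : F2 n, f x * u x := by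
  have key : ∀ x : F2 n, restrictCoeff f (Vp x) (αp x) 0 * u x
      = ∑ y : F2 n, (if y ∈ coset (Vp x) (αp x) then f y * u x / (coset (Vp x) (αp x)).card else 0) := by
    intro x
    rw [mean_eq, Finset.sum_ite_mem, Finset.univ_inter, div_mul_eq_mul_div,
      Finset.sum_mul, Finset.sum_div]
  calc ∑ x : F2 n, restrictCoeff f (Vp x) (αp x) 0 * u x
      = ∑ x : F2 n, ∑ y : F2 n,
          (if y ∈ coset (Vp x) (αp x) then f y * u x / (coset (Vp x) (αp x)).card else 0) := by
        exact Finset.sum_congr rfl fun x _ => key x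
    _ = ∑ y : F2 n, ∑ x : F2 n,
          (if y ∈ coset (Vp x) (αp x) then f y * u x / (coset (Vp x) (αp x)).card else 0) :=
        Finset.sum_comm
    _ = ∑ y : F2 n, ∑ x : F2 n,
          (if x ∈ coset (Vp y) (αp y) then f y * u y / (coset (Vp y) (αp y)).card else 0) := by
        refine Finset.sum_congr rfl fun y _ => Finset.sum_congr rfl fun x _ => ?_
        by_cases hxy : y ∈ coset (Vp x) (αp x)
        · rw [if_pos hxy, if_pos (h.symm hxy), h.coset_eq hxy, hu x y hxy]
        · rw [if_neg hxy, if_neg]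
          intro hyx
          exact hxy (h.symm hyx)
    _ = ∑ y : F2 n, f y * u y := by
        refine Finset.sum_congr rfl fun y _ => ?_
        rw [Finset.sum_ite_mem, Finset.univ_inter, Finset.sum_const]
        have hc : ((coset (Vp y) (αp y)).card : ℝ) ≠ 0 := by
          have := card_coset (Vp y) (αp y) ▸ Vfin_card_pos (Vp y)
          exact_mod_cast this.ne'
        rw [nsmul_eq_mul]
        field_simp
    
/-- m is constant on parts. -/
lemma PartGood.mean_const (h : PartGood Vp αp) {x y : F2 n}
    (hy : y ∈ coset (Vp x) (αp x)) :
    restrictCoeff f (Vp y) (αp y) 0 = restrictCoeff f (Vp x) (αp x) 0 := by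
  obtain ⟨h1, h2⟩ := h.eq_of_mem hy
  rw [h1, h2]

/-- Energy identity for a refinement. -/
lemma energy_identity
    {Vp' : F2 n → Submodule (ZMod 2) (F2 n)} {αp' : F2 n → F2 n}
    (h : PartGood Vp αp) (h' : PartGood Vp' αp')
    (href : ∀ x y : F2 n, y ∈ coset (Vp' x) (αp' x) → y ∈ coset (Vp x) (αp x)) :
    ∑ x : F2 n, (restrictCoeff f (Vp' x) (αp' x) 0)^2
      = ∑ x : F2 n, (restrictCoeff f (Vp x) (αp x) 0)^2
        + ∑ x : F2 n, (restrictCoeff f (Vp' x) (αp' x) 0 - restrictCoeff f (Vp x) (αp x) 0)^2 := by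
  set m := fun x => restrictCoeff f (Vp x) (αp x) 0 with hm
  set m' := fun x => restrictCoeff f (Vp' x) (αp' x) 0 with hm'
  have e1 : ∑ x : F2 n, m' x * m' x = ∑ x : F2 n, f x * m' x :=
    sum_mean_mul h' m' (fun x y hy => h'.mean_const hy)
  have e2 : ∑ x : F2 n, m' x * m x = ∑ x : F2 n, f x * m x :=
    sum_mean_mul h' m (fun x y hy => h.mean_const (href x y hy))
  have e3 : ∑ x : F2 n, m x * m x = ∑ x : F2 n, f x * m x :=
    sum_mean_mul h m (fun x y hy => h.mean_const hy)
  have expand : ∀ x : F2 n, (m' x - m x)^2 = m' x * m' x - 2 * (m' x * m x) + m x * m x := by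
    intro x; ring
  rw [Finset.sum_congr rfl fun x _ => expand x, Finset.sum_add_distrib, Finset.sum_sub_distrib]
  have sq1 : ∑ x : F2 n, m' x ^ 2 = ∑ x : F2 n, m' x * m' x :=
    Finset.sum_congr rfl fun x _ => sq (m' x)
  have sq2 : ∑ x : F2 n, m x ^ 2 = ∑ x : F2 n, m x * m x :=
    Finset.sum_congr rfl fun x _ => sq (m x)
  have s2 : ∑ x : F2 n, 2 * (m' x * m x) = 2 * ∑ x : F2 n, m' x * m x :=
    (Finset.mul_sum _ _ _).symm
  show ∑ x : F2 n, m' x ^ 2 = ∑ x : F2 n, m x ^ 2 + _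
  rw [sq1, sq2]
  linarith [e1, e2, e3, s2]

end PartitionLemmas
section Split
variable {n : ℕ}
attribute [local instance] Classical.propDecidable

lemma zmod2_cases (a : ZMod 2) : a = 0 ∨ a = 1 := by fin_cases a <;> [left; right] <;> rfl

lemma mem_inf_ker {V : Submodule (ZMod 2) (F2 n)} {γ : F2 n} {x : F2 n} :
    x ∈ V ⊓ LinearMap.ker (ipL γ) ↔ x ∈ V ∧ ip γ x = 0 := by
  simp [Submodule.mem_inf, LinearMap.mem_ker]

/-- Character sum over V vanishes when γ is nontrivial on V. -/
lemma sum_chi_eq_zero {V : Submodule (ZMod 2) (F2 n)} {γ v₀ : F2 n}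
    (hv : v₀ ∈ V) (h1 : ip γ v₀ = 1) : ∑ v ∈ Vfin V, chi γ v = 0 := by
  have e : ∑ v ∈ Vfin V, chi γ v = ∑ v ∈ Vfin V, chi γ (v + v₀) := by
    refine Finset.sum_nbij' (fun v => v + v₀) (fun v => v + v₀) ?_ ?_ ?_ ?_ ?_
    · intro v hvv; exact mem_Vfin.2 (V.add_mem (mem_Vfin.1 hvv) hv)
    · intro v hvv; exact mem_Vfin.2 (V.add_mem (mem_Vfin.1 hvv) hv)
    · intro v _; exact add_add_cancel_f2 v v₀
    · intro v _; exact add_add_cancel_f2 v v₀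
    · intro v _; rw [add_add_cancel_f2]
  have e2 : ∑ v ∈ Vfin V, chi γ (v + v₀) = - ∑ v ∈ Vfin V, chi γ v := by
    rw [← Finset.sum_neg_distrib]
    refine Finset.sum_congr rfl fun v _ => ?_
    rw [chi_add_right, chi_eq_neg_one γ v₀ h1, mul_neg_one]
  linarith [e.trans e2]

/-- Splitting a sum over V into the two halves determined by γ. -/
lemma two_mul_sum_half {V : Submodule (ZMod 2) (F2 n)} {γ : F2 n} (g : F2 n → ℝ) :
    2 * ∑ v ∈ Vfin (V ⊓ LinearMap.ker (ipL γ)), g v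
      = ∑ v ∈ Vfin V, g v + ∑ v ∈ Vfin V, g v * chi γ v := by
  have hfil : Vfin (V ⊓ LinearMap.ker (ipL γ)) = (Vfin V).filter (fun v => ip γ v = 0) := by
    ext v; simp [mem_Vfin, Finset.mem_filter, mem_inf_ker, Vfin]
  rw [hfil, ← Finset.sum_add_distrib, Finset.mul_sum, Finset.sum_filter]
  refine Finset.sum_congr rfl fun v hvv => ?_
  rcases zmod2_cases (ip γ v) with h0 | h0
  · rw [if_pos h0, chi_eq_one γ v h0]; ring
  · rw [if_neg (by rw [h0]; decide), chi_eq_neg_one γ v h0]; ring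

/-- The other half, via translation by v₀. -/
lemma two_mul_sum_half' {V : Submodule (ZMod 2) (F2 n)} {γ v₀ : F2 n}
    (hv : v₀ ∈ V) (h1 : ip γ v₀ = 1) (g : F2 n → ℝ) :
    2 * ∑ v ∈ Vfin (V ⊓ LinearMap.ker (ipL γ)), g (v + v₀)
      = ∑ v ∈ Vfin V, g v - ∑ v ∈ Vfin V, g v * chi γ v := by
  have e : ∑ v ∈ Vfin (V ⊓ LinearMap.ker (ipL γ)), g (v + v₀)
      = ∑ v ∈ (Vfin V).filter (fun v => ip γ v = 1), g v := by
    refine Finset.sum_nbij' (fun v => v + v₀) (fun v => v + v₀) ?_ ?_ ?_ ?_ ?_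
    · intro v hvv
      obtain ⟨hv1, hv2⟩ := mem_inf_ker.1 (mem_Vfin.1 hvv)
      refine Finset.mem_filter.2 ⟨mem_Vfin.2 (V.add_mem hv1 hv), ?_⟩
      rw [ip_add_right, hv2, h1, zero_add]
    · intro v hvv
      obtain ⟨hv1, hv2⟩ := Finset.mem_filter.1 hvv
      refine mem_Vfin.2 (mem_inf_ker.2 ⟨V.add_mem (mem_Vfin.1 hv1) hv, ?_⟩)
      rw [ip_add_right, hv2, h1]
      decide
    · intro v _; exact add_add_cancel_f2 v v₀
    · intro v _; exact add_add_cancel_f2 v v₀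
    · intro v _; rfl
  rw [e, ← Finset.sum_sub_distrib, Finset.mul_sum, Finset.sum_filter]
  refine Finset.sum_congr rfl fun v hvv => ?_
  rcases zmod2_cases (ip γ v) with h0 | h0
  · rw [if_neg (by rw [h0]; decide), chi_eq_one γ v h0]; ring
  · rw [if_pos h0, chi_eq_neg_one γ v h0]; ring

/-- The two halves have equal size: 2·|V'| = |V|. -/
lemma two_mul_card_half {V : Submodule (ZMod 2) (F2 n)} {γ v₀ : F2 n}
    (hv : v₀ ∈ V) (h1 : ip γ v₀ = 1) :
    2 * ((Vfin (V ⊓ LinearMap.ker (ipL γ))).card : ℝ) = ((Vfin V).card : ℝ) := by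
  have h := two_mul_sum_half (V := V) (γ := γ) (fun _ => (1:ℝ))
  simp only [one_mul, Finset.sum_const, nsmul_eq_mul, mul_one] at h
  rw [sum_chi_eq_zero hv h1, add_zero] at h
  exact h

/-- Key computation: the mean on the half-coset differs from the original mean
by ±(the Fourier coefficient). -/
lemma split_mean {V : Submodule (ZMod 2) (F2 n)} {γ v₀ : F2 n}
    (hv : v₀ ∈ V) (h1 : ip γ v₀ = 1) (f : F2 n → ℝ) (α : F2 n) (c : ZMod 2) :
    restrictCoeff f (V ⊓ LinearMap.ker (ipL γ)) (α + c • v₀) 0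
      = restrictCoeff f V α 0 + (-1:ℝ) ^ c.val * restrictCoeff f V α γ := by
  have hN : (0:ℝ) < ((Vfin V).card : ℝ) := by exact_mod_cast Vfin_card_pos V
  have hN' : (0:ℝ) < ((Vfin (V ⊓ LinearMap.ker (ipL γ))).card : ℝ) := by
    exact_mod_cast Vfin_card_pos _
  have h2N : ((Vfin V).card : ℝ) = 2 * ((Vfin (V ⊓ LinearMap.ker (ipL γ))).card : ℝ) :=
    (two_mul_card_half hv h1).symm
  rw [restrictCoeff_eq, restrictCoeff_eq, restrictCoeff_eq]
  simp only [chi_zero_left, mul_one]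
  rcases zmod2_cases c with hc | hc <;> subst hc
  · simp only [zero_smul, add_zero]
    have hh := two_mul_sum_half (V := V) (γ := γ) (fun v => f (v + α))
    rw [show ((0:ZMod 2)).val = 0 from rfl, pow_zero, one_mul]
    rw [div_add_div _ _ (ne_of_gt hN) (ne_of_gt hN), div_eq_div_iff (ne_of_gt hN') (by positivity)]
    rw [h2N]
    ring_nf at hh ⊢
    simp only [add_comm, add_left_comm, add_assoc] at hh ⊢
    nlinarith [hh]
  · rw [show ((1:ZMod 2)).val = 1 from rfl, pow_one, one_smul]
    have hh := two_mul_sum_half' hv h1 (fun v => f (v + α))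
    have hrw : ∀ v : F2 n, v + (α + v₀) = (v + v₀) + α := by intro v; abel
    rw [Finset.sum_congr rfl fun v _ => by rw [hrw v]]
    rw [neg_one_mul, ← sub_eq_add_neg, div_sub_div _ _ (ne_of_gt hN) (ne_of_gt hN),
      div_eq_div_iff (ne_of_gt hN') (by positivity)]
    rw [h2N]
    ring_nf at hh ⊢
    simp only [add_comm, add_left_comm, add_assoc] at hh ⊢
    nlinarith [hh]

end Split
section Refine
variable {n : ℕ}
attribute [local instance] Classical.propDecidable

lemma mem_perp {V : Submodule (ZMod 2) (F2 n)} {γ : F2 n} :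
    γ ∈ perp V ↔ ∀ v ∈ V, ip γ v = 0 := Iff.rfl

lemma zmod2_add_eq_zero {a b : ZMod 2} (h : a + b = 0) : a = b := by
  revert h; revert a b; decide

lemma exists_gamma {f : F2 n → ℝ} {δ : ℝ} {V : Submodule (ZMod 2) (F2 n)} {α : F2 n}
    (h : ¬ IsDeltaRegular f V α δ) :
    ∃ γ v₀, v₀ ∈ V ∧ ip γ v₀ = 1 ∧ δ < |restrictCoeff f V α γ| := by
  rw [IsDeltaRegular] at h
  push_neg at h
  obtain ⟨W, hW, γ, hγW, hγ0, hbig⟩ := h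
  have hnp : γ ∉ perp V := by
    intro hmem
    have h2 : γ ∈ W ⊓ perp V := ⟨hγW, hmem⟩
    rw [hW.inf_eq_bot] at h2
    exact hγ0 (by simpa using h2)
  rw [mem_perp] at hnp
  push_neg at hnp
  obtain ⟨v₀, hv₀, hne⟩ := hnp
  rcases zmod2_cases (ip γ v₀) with h0 | h0
  · exact absurd h0 hne
  · exact ⟨γ, v₀, hv₀, h0, hbig⟩

lemma finrank_drop {V : Submodule (ZMod 2) (F2 n)} {γ v₀ : F2 n}
    (hv : v₀ ∈ V) (h1 : ip γ v₀ = 1) :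
    Module.finrank (ZMod 2) ↥(V ⊓ LinearMap.ker (ipL γ)) + 1
      = Module.finrank (ZMod 2) ↥V := by
  set ψ : ↥V →ₗ[ZMod 2] ZMod 2 := (ipL γ).comp V.subtype with hψ
  have hker : LinearMap.ker ψ = Submodule.comap V.subtype (LinearMap.ker (ipL γ)) := by
    rw [hψ, LinearMap.ker_comp]
  have hrange : LinearMap.range ψ = ⊤ := by
    rw [eq_top_iff]
    intro c _
    have h1' : ψ ⟨v₀, hv⟩ = 1 := h1
    have : c • (1 : ZMod 2) ∈ LinearMap.range ψ :=
      Submodule.smul_mem _ c ⟨⟨v₀, hv⟩, h1'⟩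
    simpa using this
  have hrn := LinearMap.finrank_range_add_finrank_ker ψ
  rw [hrange] at hrn
  have htop : Module.finrank (ZMod 2) ↥(⊤ : Submodule (ZMod 2) (ZMod 2)) = 1 := by
    rw [finrank_top, Module.finrank_self]
  rw [htop] at hrn
  have hmap : Submodule.map V.subtype (LinearMap.ker ψ) = V ⊓ LinearMap.ker (ipL γ) := by
    rw [hker, Submodule.map_comap_subtype]
  have heq : Module.finrank (ZMod 2) ↥(LinearMap.ker ψ)
      = Module.finrank (ZMod 2) ↥(V ⊓ LinearMap.ker (ipL γ)) := by
    rw [← hmap]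
    exact (Submodule.equivMapOfInjective V.subtype (Submodule.injective_subtype V)
      (LinearMap.ker ψ)).finrank_eq
  omega

/-- The total energy (un-normalized). -/
noncomputable def SQ (f : F2 n → ℝ) (Vp : F2 n → Submodule (ZMod 2) (F2 n))
    (αp : F2 n → F2 n) : ℝ :=
  ∑ x : F2 n, (restrictCoeff f (Vp x) (αp x) 0)^2

lemma card_irr (f : F2 n → ℝ) (δ : ℝ) (Vp : F2 n → Submodule (ZMod 2) (F2 n))
    (αp : F2 n → F2 n) :
    (Nat.card {x : F2 n // ¬ IsDeltaRegular f (Vp x) (αp x) δ})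
      = (Finset.univ.filter (fun x => ¬ IsDeltaRegular f (Vp x) (αp x) δ)).card := by
  rw [Nat.card_eq_fintype_card, Fintype.card_subtype]

lemma neg_one_pow_sq (k : ℕ) : ((-1:ℝ)^k)^2 = 1 := by
  rw [← pow_mul, mul_comm, pow_mul, neg_one_sq, one_pow]

lemma addw (a b w : F2 n) : (a + (b + w)) + w = a + b := by
  rw [show (a + (b + w)) + w = a + b + (w + w) by abel, add_self_f2, add_zero]

/-- The refinement step. -/
lemma refine_step {f : F2 n → ℝ} {δ : ℝ} (hδ : 0 < δ)
    {Vp : F2 n → Submodule (ZMod 2) (F2 n)} {αp : F2 n → F2 n}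
    (hpg : PartGood Vp αp)
    (hirr : δ * 2^n < ((Nat.card {x : F2 n // ¬ IsDeltaRegular f (Vp x) (αp x) δ}) : ℝ)) :
    ∃ (Vp' : F2 n → Submodule (ZMod 2) (F2 n)) (αp' : F2 n → F2 n),
      PartGood Vp' αp' ∧
      (∀ x, Module.finrank (ZMod 2) (Vp x) ≤ Module.finrank (ZMod 2) (Vp' x) + 1) ∧
      SQ f Vp αp + δ^3 * 2^n ≤ SQ f Vp' αp' := by
  classical
  have key : ∀ (V : Submodule (ZMod 2) (F2 n)) (α : F2 n), ¬ IsDeltaRegular f V α δ →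
      ∃ γ v₀, v₀ ∈ V ∧ ip γ v₀ = 1 ∧ δ < |restrictCoeff f V α γ| := by
    intro V α h
    obtain ⟨γ, v₀, a, b, c⟩ := exists_gamma h
    exact ⟨γ, v₀, a, b, c⟩
  choose! γf vf hmem hone hbig using key
  set R : F2 n → Prop := fun x => IsDeltaRegular f (Vp x) (αp x) δ with hR
  set G : F2 n → F2 n := fun x => γf (Vp x) (αp x) with hG
  set v0 : F2 n → F2 n := fun x => vf (Vp x) (αp x) with hv0
  set Vp' : F2 n → Submodule (ZMod 2) (F2 n) := fun x =>
    if R x then Vp x else Vp x ⊓ LinearMap.ker (ipL (G x)) with hVp'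
  set αp' : F2 n → F2 n := fun x =>
    if R x then αp x else αp x + (ip (G x) (x + αp x)) • v0 x with hαp'
  have hdata : ∀ x y : F2 n, y + αp x ∈ Vp x →
      Vp y = Vp x ∧ αp y = αp x ∧ (R y ↔ R x) ∧ G y = G x ∧ v0 y = v0 x := by
    intro x y hy
    obtain ⟨e1, e2⟩ := hpg.2 x y hy
    refine ⟨e1, e2, ?_, ?_, ?_⟩ <;> simp [hR, hG, hv0, e1, e2]
  have hmem' : ∀ x, ¬ R x → v0 x ∈ Vp x := fun x hx => hmem _ _ hx
  have hone' : ∀ x, ¬ R x → ip (G x) (v0 x) = 1 := fun x hx => hone _ _ hx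
  have hbig' : ∀ x, ¬ R x → δ < |restrictCoeff f (Vp x) (αp x) (G x)| :=
    fun x hx => hbig _ _ hx
  -- each point is in its own new part
  have hmemown : ∀ x, x + αp' x ∈ Vp' x := by
    intro x
    by_cases hx : R x
    · simp only [hαp', hVp', if_pos hx]; exact hpg.1 x
    · simp only [hαp', hVp', if_neg hx]
      have hmemV : x + (αp x + ip (G x) (x + αp x) • v0 x)
          = (x + αp x) + ip (G x) (x + αp x) • v0 x := by abel
      rw [hmemV]
      refine Submodule.mem_inf.2 ⟨(Vp x).add_mem (hpg.1 x)
        (Submodule.smul_mem _ _ (hmem' x hx)), ?_⟩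
      rw [LinearMap.mem_ker, ipL_apply, ip_add_right, ip_smul_right, hone' x hx, mul_one,
        CharTwo.add_self_eq_zero]
  -- new parts refine old parts
  have hback : ∀ x y : F2 n, y + αp' x ∈ Vp' x → y + αp x ∈ Vp x := by
    intro x y hy
    by_cases hx : R x
    · simpa only [hαp', hVp', if_pos hx] using hy
    · simp only [hαp', hVp', if_neg hx] at hy
      have h2 : y + αp x = (y + (αp x + ip (G x) (x + αp x) • v0 x))
          + ip (G x) (x + αp x) • v0 x := (addw y (αp x) _).symm
      rw [h2]
      exact (Vp x).add_mem (Submodule.mem_inf.1 hy).1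
        (Submodule.smul_mem _ _ (hmem' x hx))
  -- part data is constant on new parts
  have hconst : ∀ x y : F2 n, y + αp' x ∈ Vp' x → Vp' y = Vp' x ∧ αp' y = αp' x := by
    intro x y hy
    have hyold := hback x y hy
    obtain ⟨e1, e2, e3, e4, e5⟩ := hdata x y hyold
    by_cases hx : R x
    · have hRy : R y := e3.2 hx
      constructor
      · show (if R y then Vp y else _) = (if R x then Vp x else _)
        rw [if_pos hx, if_pos hRy, e1]
      · show (if R y then αp y else _) = (if R x then αp x else _)
        rw [if_pos hx, if_pos hRy, e2]
    · have hRy : ¬ R y := fun h => hx (e3.1 h)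
      simp only [hαp', hVp', if_neg hx] at hy
      have hker : ip (G x) (y + (αp x + ip (G x) (x + αp x) • v0 x)) = 0 := by
        have := (Submodule.mem_inf.1 hy).2
        rwa [LinearMap.mem_ker, ipL_apply] at this
      have hcy : ip (G x) (y + αp x) = ip (G x) (x + αp x) := by
        have hsplit : y + (αp x + ip (G x) (x + αp x) • v0 x)
            = (y + αp x) + ip (G x) (x + αp x) • v0 x := by abel
        rw [hsplit, ip_add_right, ip_smul_right, hone' x hx, mul_one] at hker
        exact zmod2_add_eq_zero hker
      constructor
      · show (if R y then Vp y else Vp y ⊓ LinearMap.ker (ipL (G y)))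
            = (if R x then Vp x else Vp x ⊓ LinearMap.ker (ipL (G x)))
        rw [if_neg hx, if_neg hRy, e1, e4]
      · show (if R y then αp y else αp y + ip (G y) (y + αp y) • v0 y)
            = (if R x then αp x else αp x + ip (G x) (x + αp x) • v0 x)
        rw [if_neg hx, if_neg hRy, e2, e4, e5, hcy]
  have hpg' : PartGood Vp' αp' := ⟨hmemown, hconst⟩
  refine ⟨Vp', αp', hpg', ?_, ?_⟩
  · intro x
    by_cases hx : R x
    · have he : Vp' x = Vp x := if_pos hx
      rw [he]
      omega
    · have he : Vp' x = Vp x ⊓ LinearMap.ker (ipL (G x)) := if_neg hx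
      rw [he]
      have := finrank_drop (hmem' x hx) (hone' x hx)
      omega
  · -- energy increment
    have hiden := energy_identity (f := f) hpg hpg'
      (fun x y hy => mem_coset.2 (hback x y (mem_coset.1 hy)))
    have hdiff : ∀ x, ¬ R x →
        δ^2 ≤ (restrictCoeff f (Vp' x) (αp' x) 0 - restrictCoeff f (Vp x) (αp x) 0)^2 := by
      intro x hx
      have hsm := split_mean (hmem' x hx) (hone' x hx) f (αp x) (ip (G x) (x + αp x))
      have : restrictCoeff f (Vp' x) (αp' x) 0
          = restrictCoeff f (Vp x) (αp x) 0
            + (-1:ℝ)^(ip (G x) (x + αp x)).val * restrictCoeff f (Vp x) (αp x) (G x) := by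
        simp only [hVp', hαp', if_neg hx]
        exact hsm
      rw [this, add_sub_cancel_left, mul_pow, neg_one_pow_sq, one_mul]
      have habs := hbig' x hx
      calc δ^2 ≤ |restrictCoeff f (Vp x) (αp x) (G x)|^2 := by
            apply pow_le_pow_left₀ hδ.le habs.le
        _ = (restrictCoeff f (Vp x) (αp x) (G x))^2 := sq_abs _
    have hsum : δ^3 * 2^n ≤ ∑ x : F2 n,
        (restrictCoeff f (Vp' x) (αp' x) 0 - restrictCoeff f (Vp x) (αp x) 0)^2 := by
      have hsub : ∑ x ∈ Finset.univ.filter (fun x => ¬ R x),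
          (restrictCoeff f (Vp' x) (αp' x) 0 - restrictCoeff f (Vp x) (αp x) 0)^2
          ≤ ∑ x : F2 n,
          (restrictCoeff f (Vp' x) (αp' x) 0 - restrictCoeff f (Vp x) (αp x) 0)^2 :=
        Finset.sum_le_sum_of_subset_of_nonneg (Finset.filter_subset _ _)
          (fun x _ _ => sq_nonneg _)
      have hlow : ((Finset.univ.filter (fun x => ¬ R x)).card : ℝ) * δ^2
          ≤ ∑ x ∈ Finset.univ.filter (fun x => ¬ R x),
            (restrictCoeff f (Vp' x) (αp' x) 0 - restrictCoeff f (Vp x) (αp x) 0)^2 := by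
        calc ((Finset.univ.filter (fun x => ¬ R x)).card : ℝ) * δ^2
            = ∑ _x ∈ Finset.univ.filter (fun x => ¬ R x), δ^2 := by
              rw [Finset.sum_const, nsmul_eq_mul]
          _ ≤ _ := Finset.sum_le_sum fun x hx =>
              hdiff x (Finset.mem_filter.1 hx).2
      have hcard : δ * 2^n < ((Finset.univ.filter (fun x => ¬ R x)).card : ℝ) := by
        have h2 := hirr
        rw [card_irr f δ Vp αp] at h2
        convert h2 using 4
      have hδ2 : (0:ℝ) < δ^2 := by positivity
      calc δ^3 * 2^n = (δ * 2^n) * δ^2 := by ring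
        _ ≤ ((Finset.univ.filter (fun x => ¬ R x)).card : ℝ) * δ^2 := by
            exact mul_le_mul_of_nonneg_right hcard.le hδ2.le
        _ ≤ _ := hlow
        _ ≤ _ := hsub
    rw [SQ, SQ, hiden]
    linarith

end Refine
section Main
variable {n : ℕ}
attribute [local instance] Classical.propDecidable

lemma card_F2 : (Fintype.card (F2 n) : ℝ) = 2 ^ n := by
  simp [Fintype.card_fun]

lemma SQ_le {f : F2 n → ℝ} (hbd : ∀ x, f x ∈ Set.Icc (0:ℝ) 1)
    (Vp : F2 n → Submodule (ZMod 2) (F2 n)) (αp : F2 n → F2 n) :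
    SQ f Vp αp ≤ 2 ^ n := by
  rw [SQ]
  calc ∑ x : F2 n, (restrictCoeff f (Vp x) (αp x) 0)^2
      ≤ ∑ _x : F2 n, (1:ℝ) := by
        refine Finset.sum_le_sum fun x _ => ?_
        have h1 := mean_nonneg hbd (Vp x) (αp x)
        have h2 := mean_le_one hbd (Vp x) (αp x)
        nlinarith
    _ = (Fintype.card (F2 n) : ℝ) := by simp
    _ = 2 ^ n := card_F2

lemma main_induction {f : F2 n → ℝ} {δ : ℝ} (hδ : 0 < δ)
    (hbd : ∀ x, f x ∈ Set.Icc (0:ℝ) 1) (m : ℕ) :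
    ∃ (Vp : F2 n → Submodule (ZMod 2) (F2 n)) (αp : F2 n → F2 n) (k : ℕ),
      PartGood Vp αp ∧ k ≤ m ∧
      (∀ x, (n - Module.finrank (ZMod 2) (Vp x) : ℕ) ≤ k) ∧
      (k : ℝ) * (δ^3 * 2^n) ≤ SQ f Vp αp ∧
      (((Nat.card {x : F2 n // ¬ IsDeltaRegular f (Vp x) (αp x) δ}) : ℝ) ≤ δ * 2^n ∨ k = m) := by
  induction m with
  | zero =>
    refine ⟨fun _ => ⊤, fun _ => 0, 0, ⟨fun x => trivial, fun x y _ => ⟨rfl, rfl⟩⟩,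
      le_refl 0, ?_, ?_, Or.inr rfl⟩
    · intro x
      have : Module.finrank (ZMod 2) (⊤ : Submodule (ZMod 2) (F2 n)) = n := by
        rw [finrank_top]
        simp [Module.finrank_pi]
      rw [this]
      omega
    · rw [Nat.cast_zero, zero_mul, SQ]
      exact Finset.sum_nonneg fun x _ => sq_nonneg _
  | succ m ih =>
    obtain ⟨Vp, αp, k, hpg, hkm, hcodim, henergy, hdisj⟩ := ih
    by_cases hreg : ((Nat.card {x : F2 n // ¬ IsDeltaRegular f (Vp x) (αp x) δ}) : ℝ) ≤ δ * 2^n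
    · exact ⟨Vp, αp, k, hpg, le_trans hkm (Nat.le_succ m), hcodim, henergy, Or.inl hreg⟩
    · push_neg at hreg
      obtain ⟨Vp', αp', hpg', hfr, hsq⟩ := refine_step hδ hpg hreg
      refine ⟨Vp', αp', k + 1, hpg', by omega, ?_, ?_, ?_⟩
      · intro x
        have h1 := hcodim x
        have h2 := hfr x
        have h3 : Module.finrank (ZMod 2) (Vp x) ≤ n := by
          have := Submodule.finrank_le (Vp x)
          simpa [Module.finrank_pi] using this
        omega
      · push_cast
        nlinarith [henergy, hsq]
      · rcases hdisj with h | h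
        · exact absurd h (not_le.2 hreg)
        · exact Or.inr (by omega)

end Main

/-- pseudorandom partitions. There is a partition of 𝔽₂ⁿ into affine
subspaces of codimension at most 1/δ³ (the part of x is αp x + Vp x), such that the
set of points in irregular parts has size at most δ·2ⁿ. -/
theorem regular_partition_exists (n : ℕ) (f : F2 n → ℝ)
    (hbd : ∀ x, f x ∈ Set.Icc (0 : ℝ) 1) (δ : ℝ) (hδ : 0 < δ) :
    ∃ (Vp : F2 n → Submodule (ZMod 2) (F2 n)) (αp : F2 n → F2 n),
      (∀ x, x + αp x ∈ Vp x) ∧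
      (∀ x y : F2 n, y + αp x ∈ Vp x → Vp y = Vp x ∧ αp y + αp x ∈ Vp x) ∧
      (∀ x, ((n - Module.finrank (ZMod 2) (Vp x) : ℕ) : ℝ) ≤ 1 / δ ^ 3) ∧
      ((Nat.card {x : F2 n // ¬ IsDeltaRegular f (Vp x) (αp x) δ}) : ℝ) ≤ δ * 2 ^ n := by
  classical
  set m := ⌊1 / δ^3⌋₊ + 1 with hm
  obtain ⟨Vp, αp, k, hpg, hkm, hcodim, henergy, hdisj⟩ := main_induction hδ hbd m
  have hδ3 : (0:ℝ) < δ^3 := by positivity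
  have h2n : (0:ℝ) < 2^n := by positivity
  have hsqle : SQ f Vp αp ≤ 2^n := SQ_le hbd Vp αp
  have hknem : k ≠ m := by
    intro hk
    have hcast : (1:ℝ)/δ^3 < (k:ℝ) := by
      have hfl := Nat.lt_floor_add_one (1 / δ^3)
      rw [hk, hm]
      push_cast
      linarith
    have hm1 : (1:ℝ) < (k:ℝ) * δ^3 := by
      calc (1:ℝ) = (1/δ^3) * δ^3 := by field_simp
        _ < (k:ℝ) * δ^3 := mul_lt_mul_of_pos_right hcast hδ3
    nlinarith [henergy, hsqle]
  have hirr : ((Nat.card {x : F2 n // ¬ IsDeltaRegular f (Vp x) (αp x) δ}) : ℝ) ≤ δ * 2^n := by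
    rcases hdisj with h | h
    · exact h
    · exact absurd h hknem
  have hk3 : (k:ℝ) * δ^3 ≤ 1 := by
    nlinarith [henergy, hsqle]
  have hkle : (k:ℝ) ≤ 1 / δ^3 := by
    rw [le_div_iff₀ hδ3]
    exact hk3
  refine ⟨Vp, αp, hpg.1, ?_, ?_, hirr⟩
  · intro x y hy
    obtain ⟨h1, h2⟩ := hpg.2 x y hy
    refine ⟨h1, ?_⟩
    rw [h2, add_self_f2]
    exact (Vp x).zero_mem
  · intro x
    calc ((n - Module.finrank (ZMod 2) (Vp x) : ℕ) : ℝ) ≤ (k:ℝ) := by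
          exact_mod_cast hcodim x
      _ ≤ 1 / δ^3 := hkle
end

section
/- Let 𝒱 ⊆ 𝔽₂ⁿ be a linear subspace of codimension C and let 𝒲 be a linear subspace with 𝒲 ⊕ 𝒱^⊥ = 𝔽₂ⁿ. Then there exists a set S ⊆ 𝒲 with |S| ≥ n − C such that for every u ∈ S, the coset u + 𝒱^⊥ contains at least one standard basis vector e_i. Moreover, there exists a subset S₁ ⊆ S with |S₁| ≥ n − 2C such that for every u ∈ S₁, the coset u + 𝒱^⊥ contains exactly one standard basis vector. -/
open Finset

noncomputable def ipB (n : ℕ) : LinearMap.BilinForm (ZMod 2) (F2 n) :=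
  LinearMap.mk₂ (ZMod 2) ip
    (fun a b x => by simp [ip, add_mul, Finset.sum_add_distrib])
    (fun c a x => by simp [ip, Finset.mul_sum, mul_assoc])
    (fun a x y => by simp [ip, mul_add, Finset.sum_add_distrib])
    (fun c a x => by simp [ip, Finset.mul_sum, mul_left_comm])

lemma ipB_apply {n : ℕ} (x y : F2 n) : ipB n x y = ip x y := rfl

lemma ip_comm' {n : ℕ} (x y : F2 n) : ip x y = ip y x := by simp [ip, mul_comm]

lemma ip_single' {n : ℕ} (x : F2 n) (i : Fin n) : ip x (Pi.single i 1) = x i := by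
  simp [ip, Pi.single_apply, mul_ite, Finset.sum_ite_eq']

lemma ipB_nondeg (n : ℕ) : (ipB n).Nondegenerate := by
  constructor
  · intro x hx
    funext i
    have := hx (Pi.single i 1)
    simpa [ipB_apply, ip_single'] using this
  · intro x hx
    funext i
    have := hx (Pi.single i 1)
    rw [ipB_apply, ip_comm', ip_single'] at this
    exact this

lemma ipB_refl (n : ℕ) : (ipB n).IsRefl := by
  intro x y h
  simpa [ipB_apply, ip_comm' x y] using h

lemma perp_eq_orthogonal {n : ℕ} (V : Submodule (ZMod 2) (F2 n)) :
    perp V = (ipB n).orthogonal V := by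
  ext γ
  constructor
  · intro h v hv
    have := h v hv
    simpa [ipB_apply, LinearMap.BilinForm.IsOrtho, ip_comm' v γ] using this
  · intro h v hv
    have := h v hv
    simpa [ipB_apply, LinearMap.BilinForm.IsOrtho, ip_comm' v γ] using this

lemma finrank_perp {n : ℕ} (V : Submodule (ZMod 2) (F2 n)) :
    Module.finrank (ZMod 2) (perp V) = n - Module.finrank (ZMod 2) V := by
  rw [perp_eq_orthogonal, LinearMap.BilinForm.finrank_orthogonal (ipB_nondeg n),
    Module.finrank_fin_fun]

/-- at least n − C cosets of 𝒱^⊥ meeting 𝒲 contain a standard basis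
vector, and at least n − 2C of them contain exactly one. -/
theorem std_basis_vecs_in_cosets (n C : ℕ) (V : Submodule (ZMod 2) (F2 n))
    (hC : n - Module.finrank (ZMod 2) V = C)
    (W : Submodule (ZMod 2) (F2 n)) (hW : IsCompl W (perp V)) :
    ∃ S : Finset (F2 n), ↑S ⊆ (W : Set (F2 n)) ∧ n - C ≤ S.card ∧
      (∀ u ∈ S, ∃ i : Fin n, Pi.single i (1 : ZMod 2) + u ∈ perp V) ∧
      ∃ S₁ ⊆ S, n - 2 * C ≤ S₁.card ∧
        ∀ u ∈ S₁, ∃! i : Fin n, Pi.single i (1 : ZMod 2) + u ∈ perp V := by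
  classical
  set q := Submodule.projectionOnto W (perp V) hW with hq
  set e : Fin n → F2 n := fun i => Pi.single i (1 : ZMod 2) with he
  set u : Fin n → F2 n := fun i => (q (e i) : F2 n) with hu
  have hneg : ∀ b : F2 n, -b = b := by
    intro b; funext i
    have h2 : ∀ x : ZMod 2, -x = x := by decide
    simpa using h2 (b i)
  have hself : ∀ b : F2 n, b + b = 0 := by
    intro b; funext i
    have h2 : ∀ x : ZMod 2, x + x = 0 := by decide
    simpa using h2 (b i)
  have hsub : ∀ x : F2 n, x + (q x : F2 n) ∈ perp V := by
    intro x
    rw [← Submodule.projectionOnto_apply_eq_zero_iff hW (x := x + (q x : F2 n))]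
    rw [map_add]
    have h1 : q ((q x : F2 n)) = q x :=
      Submodule.projectionOnto_apply_left hW (q x)
    rw [h1]
    ext
    exact congrFun (hself (q x : F2 n)) _
  have key : ∀ (i : Fin n) (w : F2 n), w ∈ W → (e i + w ∈ perp V ↔ u i = w) := by
    intro i w hw
    constructor
    · intro h
      have h1 : q (e i + w) = 0 :=
        (Submodule.projectionOnto_apply_eq_zero_iff hW).2 h
      have h2 : q w = ⟨w, hw⟩ := Submodule.projectionOnto_apply_left hW ⟨w, hw⟩
      rw [map_add, h2] at h1
      have h3 : (q (e i) : F2 n) + w = 0 := congrArg (Subtype.val) h1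
      have h4 := eq_neg_of_add_eq_zero_left h3
      rw [hneg] at h4
      exact h4
    · intro h
      rw [← h]
      exact hsub (e i)
  set S : Finset (F2 n) := Finset.image u Finset.univ with hS
  have hSW : ∀ w ∈ S, w ∈ W := by
    intro w hw
    obtain ⟨i, _, hi⟩ := Finset.mem_image.1 hw
    rw [← hi]
    exact (q (e i)).2
  -- finrank facts
  have hfr : Module.finrank (ZMod 2) (F2 n) = n := Module.finrank_fin_fun (ZMod 2)
  have hWf : Module.finrank (ZMod 2) W + Module.finrank (ZMod 2) (perp V) = n := by
    have h := Submodule.finrank_add_eq_of_isCompl hW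
    rwa [hfr] at h
  have hPf := finrank_perp V
  have hVle : Module.finrank (ZMod 2) V ≤ n := by
    have h := Submodule.finrank_le V
    rwa [hfr] at h
  -- W is contained in the span of S
  set q' : F2 n →ₗ[ZMod 2] F2 n := W.subtype.comp q with hq'
  have hspan : W ≤ Submodule.span (ZMod 2) (S : Set (F2 n)) := by
    have hrange : (S : Set (F2 n)) = q' '' Set.range e := by
      rw [hS, Finset.coe_image, Finset.coe_univ, Set.image_univ, ← Set.range_comp]
      rfl
    have hetop : Submodule.span (ZMod 2) (Set.range e) = ⊤ := by
      have heq : Set.range e = Set.range (Pi.basisFun (ZMod 2) (Fin n)) := by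
        ext x
        simp [he, Pi.basisFun_apply]
      rw [heq]
      exact (Pi.basisFun (ZMod 2) (Fin n)).span_eq
    rw [hrange, ← Submodule.map_span, hetop]
    intro w hw
    refine ⟨w, Submodule.mem_top, ?_⟩
    show (q w : F2 n) = w
    rw [Submodule.projectionOnto_apply_left hW ⟨w, hw⟩]
  have hfin : Module.finrank (ZMod 2) W ≤ S.card := by
    calc Module.finrank (ZMod 2) W
        ≤ Module.finrank (ZMod 2) (Submodule.span (ZMod 2) (S : Set (F2 n))) :=
          Submodule.finrank_mono hspan
      _ ≤ S.card := finrank_span_finset_le_card S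
  have hScard_le : S.card ≤ n := by
    have h := Finset.card_image_le (s := (Finset.univ : Finset (Fin n))) (f := u)
    simpa using h
  -- fiber counting
  have hcount : ∑ w ∈ S, (Finset.univ.filter fun i => u i = w).card = n := by
    have h := Finset.card_eq_sum_card_fiberwise
      (f := u) (s := Finset.univ) (t := S)
      (fun i _ => Finset.mem_image_of_mem u (Finset.mem_univ i))
    simpa using h.symm
  set S₁ : Finset (F2 n) :=
    S.filter (fun w => (Finset.univ.filter fun i => u i = w).card = 1) with hS₁
  have hfib1 : ∀ w ∈ S, 1 ≤ (Finset.univ.filter fun i => u i = w).card := by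
    intro w hw
    obtain ⟨j, _, hj⟩ := Finset.mem_image.1 hw
    refine Finset.card_pos.2 ⟨j, ?_⟩
    simp [hj]
  have hS1card : 2 * S.card ≤ n + S₁.card := by
    have hsplit := Finset.sum_filter_add_sum_filter_not S
      (fun w => (Finset.univ.filter fun i => u i = w).card = 1)
      (fun w => (Finset.univ.filter fun i => u i = w).card)
    rw [← hS₁] at hsplit
    have h1 : ∑ w ∈ S₁, (Finset.univ.filter fun i => u i = w).card = S₁.card := by
      rw [Finset.sum_congr rfl (fun w hw => (Finset.mem_filter.1 hw).2)]
      simp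
      rfl
    have h2 : (S.card - S₁.card) * 2 ≤
        ∑ w ∈ S.filter (fun w => ¬ (Finset.univ.filter fun i => u i = w).card = 1),
          (Finset.univ.filter fun i => u i = w).card := by
      have hc : (S.filter (fun w => ¬ (Finset.univ.filter fun i => u i = w).card = 1)).card
          = S.card - S₁.card := by
        rw [hS₁, Finset.filter_not, Finset.card_sdiff_of_subset (Finset.filter_subset _ _)]
      calc (S.card - S₁.card) * 2
          = (S.filter (fun w => ¬ (Finset.univ.filter fun i => u i = w).card = 1)).card • 2 := by
            rw [hc, smul_eq_mul]
        _ ≤ _ := by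
            refine Finset.card_nsmul_le_sum _ _ _ ?_
            intro w hw
            obtain ⟨hwS, hne⟩ := Finset.mem_filter.1 hw
            have := hfib1 w hwS
            omega
    have hS1le : S₁.card ≤ S.card := Finset.card_filter_le _ _
    omega
  refine ⟨S, fun w hw => hSW w hw, ?_, ?_, S₁, Finset.filter_subset _ _, ?_, ?_⟩
  · omega
  · intro w hw
    obtain ⟨j, _, hj⟩ := Finset.mem_image.1 hw
    exact ⟨j, (key j w (hSW w hw)).2 hj⟩
  · omega
  · intro w hw
    obtain ⟨hwS, hone⟩ := Finset.mem_filter.1 hw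
    obtain ⟨a, ha⟩ := Finset.card_eq_one.1 hone
    have hwW := hSW w hwS
    have hauniq : ∀ i : Fin n, u i = w ↔ i = a := by
      intro i
      constructor
      · intro hi
        have hmem : i ∈ Finset.univ.filter fun j => u j = w := by simp [hi]
        rw [ha] at hmem
        exact Finset.mem_singleton.1 hmem
      · intro hik
        have hmem : a ∈ Finset.univ.filter fun j => u j = w := by
          rw [ha]; exact Finset.mem_singleton_self a
        rw [hik]
        exact (Finset.mem_filter.1 hmem).2
    refine ⟨a, ?_, ?_⟩
    · exact (key a w hwW).2 ((hauniq a).2 rfl)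
    · intro i hi
      exact (hauniq i).1 ((key i w hwW).1 hi)
end
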